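/- Let A₀ ∈ gl_n(ℝ) be a normal matrix (i.e. [A₀,A₀ᵗ] = 0). Then A(t) = (2·tr(S(A₀)²)·t + 1)^{-1/2}·A₀ solves A' = -tr(S(A)²)·A + (1/2)[A,[A,Aᵗ]] - (1/2)tr(A)·[A,Aᵗ] with A(0) = A₀, on the interval where 2·tr(S(A₀)²)·t + 1 > 0. -/

import Mathlib

open Matrix Filter

noncomputable section

abbrev Mat (n : ℕ) := Matrix (Fin n) (Fin n) ℝ

/-- Commutator bracket of matrices. -/
def bkt {n : ℕ} (X Y : Mat n) : Mat n := X * Y - Y * X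

/-- Frobenius inner product ⟨X,Y⟩ = tr(XYᵗ). -/
def frob {n : ℕ} (X Y : Mat n) : ℝ := Matrix.trace (X * Yᵀ)

/-- Squared Frobenius norm ‖X‖² = tr(XXᵗ). -/
def sqnorm {n : ℕ} (X : Mat n) : ℝ := frob X X

/-- Symmetric part S(X) = (X+Xᵗ)/2. -/
def symPart {n : ℕ} (X : Mat n) : Mat n := (1/2 : ℝ) • (X + Xᵀ)

/-- Right-hand side of the bracket flow ODE. -/
def rhs {n : ℕ} (A : Mat n) : Mat n :=
  (-(Matrix.trace (symPart A * symPart A))) • A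
    + (1/2 : ℝ) • bkt A (bkt A Aᵀ)
    - ((1/2 : ℝ) * Matrix.trace A) • bkt A Aᵀ

lemma rhs_smul {n : ℕ} (A₀ : Mat n) (hnormal : bkt A₀ A₀ᵀ = 0) (a : ℝ) :
    rhs (a • A₀) = (-(Matrix.trace (symPart A₀ * symPart A₀) * (a*a*a))) • A₀ := by
  have hsym : symPart (a • A₀) = a • symPart A₀ := by
    simp [symPart, smul_add, smul_smul, mul_comm]
  have hbkt : bkt (a • A₀) (a • A₀)ᵀ = 0 := by
    simp only [bkt, transpose_smul, smul_mul_assoc, mul_smul_comm, smul_smul]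
    rw [← smul_sub]
    have : A₀ * A₀ᵀ - A₀ᵀ * A₀ = 0 := hnormal
    rw [this, smul_zero]
  rw [rhs, hsym, hbkt]
  simp only [bkt, mul_zero, zero_mul, sub_zero, sub_self, smul_zero, add_zero]
  rw [smul_mul_assoc, mul_smul_comm, smul_smul, trace_smul]
  simp only [smul_eq_mul, smul_smul, trace_smul]
  ring_nf

theorem stmt13 {n : ℕ} (A₀ : Mat n) (hnormal : bkt A₀ A₀ᵀ = 0) :
    ((2 * Matrix.trace (symPart A₀ * symPart A₀) * (0:ℝ) + 1) ^ (-(1/2) : ℝ)) • A₀ = A₀ ∧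
    ∀ t : ℝ, 0 < 2 * Matrix.trace (symPart A₀ * symPart A₀) * t + 1 →
      ∀ i j, HasDerivAt
        (fun s => ((2 * Matrix.trace (symPart A₀ * symPart A₀) * s + 1) ^ (-(1/2) : ℝ)) * A₀ i j)
        (rhs (((2 * Matrix.trace (symPart A₀ * symPart A₀) * t + 1) ^ (-(1/2) : ℝ)) • A₀) i j)
        t := by
  set c := Matrix.trace (symPart A₀ * symPart A₀) with hc
  refine ⟨by norm_num, ?_⟩
  intro t ht i j
  set x := 2 * c * t + 1 with hx
  have hxne : x ≠ 0 := ne_of_gt ht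
  have h1 : HasDerivAt (fun s : ℝ => 2 * c * s + 1) (2 * c) t := by
    simpa using ((hasDerivAt_id t).const_mul (2 * c)).add_const 1
  have h2 := (h1.rpow_const (p := -(1/2)) (Or.inl hxne)).mul_const (A₀ i j)
  convert h2 using 1
  case e'_4 => rfl
  case e'_5 => rfl
  rw [rhs_smul A₀ hnormal]
  have ha : x ^ (-(1/2) : ℝ) * x ^ (-(1/2) : ℝ) * x ^ (-(1/2) : ℝ)
      = x ^ (-(3/2) : ℝ) := by
    rw [← Real.rpow_add ht, ← Real.rpow_add ht]; norm_num
  have hb : x ^ ((-(1/2) : ℝ) - 1) = x ^ (-(3/2) : ℝ) := by norm_num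
  simp only [Matrix.smul_apply, smul_eq_mul, ha, hb]
  rw [← hc, hx]
  ring
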